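/- Let G be a group acting on a set X and let K be a normal subgroup of G whose restricted action on X is free. Let x ∈ X, and let L and L' be subgroups of G each of which fixes x (every element of L and of L' fixes x). If L and L' have the same image under the quotient homomorphism G → G/K, then L = L'. -/

import Mathlib

lemma stmt_8_aux {G : Type*} [Group G] {X : Type*} [MulAction G X]
    (K : Subgroup G) [K.Normal]
    (hfree : ∀ (k : K) (x : X), (k : G) • x = x → k = 1)
    (x : X) (L L' : Subgroup G)
    (hL : ∀ g ∈ L, g • x = x) (hL' : ∀ g ∈ L', g • x = x)
    (him : L.map (QuotientGroup.mk' K) = L'.map (QuotientGroup.mk' K)) :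
    L ≤ L' := by
  intro g hg
  have : QuotientGroup.mk' K g ∈ L'.map (QuotientGroup.mk' K) := by
    rw [← him]; exact Subgroup.mem_map_of_mem _ hg
  obtain ⟨g', hg', heq⟩ := this
  have hk : g'⁻¹ * g ∈ K := by
    have := heq
    simp only [QuotientGroup.mk'_apply, QuotientGroup.eq] at this
    exact this
  have hfix : ((⟨g'⁻¹ * g, hk⟩ : K) : G) • x = x := by
    show (g'⁻¹ * g) • x = x
    rw [mul_smul, hL g hg, inv_smul_eq_iff, hL' g' hg']
  have h1 := hfree ⟨g'⁻¹ * g, hk⟩ x hfix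
  have hgg : g'⁻¹ * g = 1 := congrArg Subtype.val h1
  have hge : g = g' := by
    have := eq_inv_of_mul_eq_one_left hgg
    simpa using this.symm
  rwa [hge]

/-- Let `K ⊴ G` be a normal subgroup whose restricted action on the `G`-set `X` is
free, and let `x ∈ X`.  If `L` and `L'` are subgroups of `G` each of which fixes `x`,
and `L` and `L'` have the same image under the quotient homomorphism `G → G/K`, then
`L = L'`. -/
theorem stmt_8 {G : Type*} [Group G] {X : Type*} [MulAction G X]
    (K : Subgroup G) [K.Normal]
    (hfree : ∀ (k : K) (x : X), (k : G) • x = x → k = 1)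
    (x : X) (L L' : Subgroup G)
    (hL : ∀ g ∈ L, g • x = x) (hL' : ∀ g ∈ L', g • x = x)
    (him : L.map (QuotientGroup.mk' K) = L'.map (QuotientGroup.mk' K)) :
    L = L' := by
  exact le_antisymm (stmt_8_aux K hfree x L L' hL hL' him)
    (stmt_8_aux K hfree x L' L hL' hL him.symm)
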